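/- Let f : [0,1] → ℝ be C¹ with f(0)=f(1)=0 and 0 < f(s) ≤ f'(0)·s for all s ∈ (0,1). Let u_0 be C² and nonincreasing on [ξ_0,∞) with values in (0,1], and let ξ_1 ≥ ξ_0 be such that |u_0''(x)| ≤ (ε/2)·u_0(x) for all x ≥ ξ_1, where ε > 0. Set ρ = f'(0) + ε/2 and define ū(t,x) = min( u_0(x)·e^{ρt}/u_0(ξ_1), 1 ) for t ≥ 0, x ≥ ξ_1. Then at every point (t,x) ∈ [0,∞) × [ξ_1,∞) where ū(t,x) < 1, the function ū satisfies ū_t - ū_xx - f(ū) ≥ 0. -/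

import Mathlib

open Real Filter Set Topology

/-- The candidate supersolution of Theorem 1(c): `ū(t,x) = min(u₀(x) e^{ρt}/u₀(ξ₁), 1)`. -/
noncomputable def ubar (u0 : ℝ → ℝ) (ρ ξ1 : ℝ) (t x : ℝ) : ℝ :=
  min (u0 x * Real.exp (ρ * t) / u0 ξ1) 1

theorem ubar_supersolution
    (f u0 u0' u0'' : ℝ → ℝ) (ξ0 ξ1 ε : ℝ)
    (hf : ContDiff ℝ 1 f) (hf0 : f 0 = 0) (hf1 : f 1 = 0)
    (hkpp : ∀ s ∈ Set.Ioo (0:ℝ) 1, 0 < f s ∧ f s ≤ deriv f 0 * s)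
    (hεpos : 0 < ε) (hξ : ξ0 ≤ ξ1)
    (hrange : ∀ x ∈ Set.Ici ξ0, u0 x ∈ Set.Ioc (0:ℝ) 1)
    (hmono : AntitoneOn u0 (Set.Ici ξ0))
    (hd1 : ∀ x ∈ Set.Ici ξ0, HasDerivAt u0 (u0' x) x)
    (hd2 : ∀ x ∈ Set.Ici ξ0, HasDerivAt u0' (u0'' x) x)
    (hsmall : ∀ x ≥ ξ1, |u0'' x| ≤ (ε / 2) * u0 x) :
    ∀ t ≥ (0:ℝ), ∀ x ≥ ξ1,
      ubar u0 (deriv f 0 + ε / 2) ξ1 t x < 1 →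
      deriv (fun s => ubar u0 (deriv f 0 + ε / 2) ξ1 s x) t
        - deriv (deriv (fun y => ubar u0 (deriv f 0 + ε / 2) ξ1 t y)) x
        - f (ubar u0 (deriv f 0 + ε / 2) ξ1 t x) ≥ 0 := by
  intro t ht x hx hlt
  set ρ : ℝ := deriv f 0 + ε / 2 with hρ
  simp only [ubar] at hlt ⊢
  have hx0 : x ∈ Set.Ici ξ0 := le_trans hξ hx
  have hu0ξ1 : 0 < u0 ξ1 := (hrange ξ1 hξ).1
  have hu0x : 0 < u0 x := (hrange x hx0).1
  have hexp : 0 < Real.exp (ρ * t) := Real.exp_pos _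
  -- the branch value is < 1
  have hbx : u0 x * Real.exp (ρ * t) / u0 ξ1 < 1 := by
    rcases min_lt_iff.mp hlt with h | h
    · exact h
    · exact absurd h (lt_irrefl 1)
  have hv0 : 0 < u0 x * Real.exp (ρ * t) / u0 ξ1 := by positivity
  set v : ℝ := u0 x * Real.exp (ρ * t) / u0 ξ1 with hv
  -- value of ubar
  have hval : min v 1 = v := min_eq_left hbx.le
  rw [hval]
  -- time derivative
  have htd : deriv (fun s => min (u0 x * Real.exp (ρ * s) / u0 ξ1) 1) t = ρ * v := by
    have hcont : ContinuousAt (fun s => u0 x * Real.exp (ρ * s) / u0 ξ1) t := by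
      fun_prop
    have hev : ∀ᶠ s in 𝓝 t,
        min (u0 x * Real.exp (ρ * s) / u0 ξ1) 1 = u0 x * Real.exp (ρ * s) / u0 ξ1 := by
      filter_upwards [hcont.eventually_lt continuousAt_const hbx] with s hs
      exact min_eq_left hs.le
    rw [Filter.EventuallyEq.deriv_eq hev]
    have hde : HasDerivAt (fun s => u0 x * Real.exp (ρ * s) / u0 ξ1)
        (u0 x * (Real.exp (ρ * t) * ρ) / u0 ξ1) t := by
      have := ((((hasDerivAt_id t).const_mul ρ).exp).const_mul (u0 x)).div_const (u0 ξ1)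
      simpa using this
    rw [hde.deriv, hv]
    ring
  -- spatial derivative on Ici x
  have hderiv_g : ∀ y ∈ Set.Ici x,
      deriv (fun z => min (u0 z * Real.exp (ρ * t) / u0 ξ1) 1) y
        = u0' y * Real.exp (ρ * t) / u0 ξ1 := by
    intro y hy
    have hy0 : y ∈ Set.Ici ξ0 := Set.mem_Ici.mpr (le_trans (Set.mem_Ici.mp hx0) (Set.mem_Ici.mp hy))
    have hmle : u0 y ≤ u0 x := hmono hx0 hy0 hy
    have hby : u0 y * Real.exp (ρ * t) / u0 ξ1 < 1 := by
      refine lt_of_le_of_lt ?_ hbx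
      exact div_le_div₀ (mul_nonneg hu0x.le hexp.le) (mul_le_mul_of_nonneg_right hmle hexp.le) hu0ξ1 le_rfl
    have hcont : ContinuousAt (fun z => u0 z * Real.exp (ρ * t) / u0 ξ1) y :=
      ((hd1 y hy0).continuousAt.mul continuousAt_const).div_const _
    have hev : ∀ᶠ z in 𝓝 y,
        min (u0 z * Real.exp (ρ * t) / u0 ξ1) 1 = u0 z * Real.exp (ρ * t) / u0 ξ1 := by
      filter_upwards [hcont.eventually_lt continuousAt_const hby] with z hz
      exact min_eq_left hz.le
    rw [Filter.EventuallyEq.deriv_eq hev]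
    exact (((hd1 y hy0).mul_const _).div_const (u0 ξ1)).deriv
  -- the second spatial derivative is either 0 or u0'' x * exp(ρt)/u0 ξ1
  have hD : deriv (deriv (fun z => min (u0 z * Real.exp (ρ * t) / u0 ξ1) 1)) x = 0 ∨
      deriv (deriv (fun z => min (u0 z * Real.exp (ρ * t) / u0 ξ1) 1)) x
        = u0'' x * Real.exp (ρ * t) / u0 ξ1 := by
    by_cases hdiff : DifferentiableAt ℝ
        (deriv (fun z => min (u0 z * Real.exp (ρ * t) / u0 ξ1) 1)) x
    · right
      have h1 : HasDerivWithinAt (deriv (fun z => min (u0 z * Real.exp (ρ * t) / u0 ξ1) 1))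
          (deriv (deriv (fun z => min (u0 z * Real.exp (ρ * t) / u0 ξ1) 1)) x)
          (Set.Ici x) x := hdiff.hasDerivAt.hasDerivWithinAt
      have h2 : HasDerivWithinAt (fun y => u0' y * Real.exp (ρ * t) / u0 ξ1)
          (deriv (deriv (fun z => min (u0 z * Real.exp (ρ * t) / u0 ξ1) 1)) x)
          (Set.Ici x) x :=
        h1.congr (fun y hy => (hderiv_g y hy).symm) (hderiv_g x Set.self_mem_Ici).symm
      have h3 : HasDerivWithinAt (fun y => u0' y * Real.exp (ρ * t) / u0 ξ1)
          (u0'' x * Real.exp (ρ * t) / u0 ξ1) (Set.Ici x) x :=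
        (((hd2 x hx0).mul_const _).div_const (u0 ξ1)).hasDerivWithinAt
      have hu : UniqueDiffWithinAt ℝ (Set.Ici x) x := uniqueDiffOn_Ici x x Set.self_mem_Ici
      rw [← h2.derivWithin hu, h3.derivWithin hu]
    · left
      exact deriv_zero_of_not_differentiableAt hdiff
  -- KPP bound
  have hfv : f v ≤ deriv f 0 * v := (hkpp v ⟨hv0, hbx⟩).2
  rw [htd]
  have hρv : ρ * v = deriv f 0 * v + ε / 2 * v := by rw [hρ]; ring
  clear_value v ρ
  rcases hD with h0 | h1
  · rw [h0]
    linarith [mul_pos (half_pos hεpos) hv0, hρv, hfv]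
  · rw [h1]
    have hub : u0'' x ≤ ε / 2 * u0 x := le_trans (le_abs_self _) (hsmall x hx)
    have h := mul_le_mul_of_nonneg_right hub hexp.le
    have key : u0'' x * Real.exp (ρ * t) / u0 ξ1 ≤ ε / 2 * v := by
      calc u0'' x * Real.exp (ρ * t) / u0 ξ1
          ≤ ε / 2 * u0 x * Real.exp (ρ * t) / u0 ξ1 := by
            exact div_le_div₀ (by positivity) h hu0ξ1 le_rfl
        _ = ε / 2 * v := by rw [hv]; ring
    linarith
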